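/- arXiv:2310.05083 — 2 statements merged into one kernel-verified Lean document; each statement's English description precedes it below -/
import Mathlib

section
/- (Neyman–Pearson lemma, strict power gain) With P₀, P₁ densities p₀, p₁ w.r.t. μ and R = {x : p₀(x) < k·p₁(x)} for k > 0: if R' is a measurable set with P₀(R') ≤ P₀(R) and μ((R \ R') ∩ {p₁ > 0, p₀ < k·p₁}) > 0, then P₁(R') < P₁(R). -/
open MeasureTheory Set

theorem stmt_4 {α : Type*} [MeasurableSpace α] (μ : Measure α) [SigmaFinite μ]
    (p₀ p₁ : α → ENNReal) (hp₀ : Measurable p₀) (hp₁ : Measurable p₁)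
    (P₀ P₁ : Measure α) (hP₀ : P₀ = μ.withDensity p₀) (hP₁ : P₁ = μ.withDensity p₁)
    [IsProbabilityMeasure P₀] [IsProbabilityMeasure P₁]
    (k : ENNReal) (hk : 0 < k) (hk' : k ≠ ⊤)
    (R : Set α) (hR : R = {x | p₀ x < k * p₁ x})
    (R' : Set α) (hR' : MeasurableSet R') (hle : P₀ R' ≤ P₀ R)
    (hpos : 0 < μ ((R \ R') ∩ {x | 0 < p₁ x ∧ p₀ x < k * p₁ x})) :
    P₁ R' < P₁ R := by
  have hRm : MeasurableSet R := by
    rw [hR]; exact measurableSet_lt hp₀ (hp₁.const_mul k)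
  have hAm : MeasurableSet (R \ R') := hRm.diff hR'
  have hBm : MeasurableSet (R' \ R) := hR'.diff hRm
  -- key strict inequality on A = R \ R'
  have hmuA : 0 < μ (R \ R') := lt_of_lt_of_le hpos (measure_mono inter_subset_left)
  have hltA : ∀ x ∈ R \ R', p₀ x < k * p₁ x := by
    intro x hx
    have := hx.1
    rw [hR] at this
    exact this
  -- P₀ and P₁ as integrals
  have eP₀ : ∀ s : Set α, MeasurableSet s → P₀ s = ∫⁻ x in s, p₀ x ∂μ := by
    intro s hs; rw [hP₀, withDensity_apply _ hs]
  have eP₁ : ∀ s : Set α, MeasurableSet s → P₁ s = ∫⁻ x in s, p₁ x ∂μ := by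
    intro s hs; rw [hP₁, withDensity_apply _ hs]
  have hP₁fin : ∀ s : Set α, P₁ s ≠ ⊤ := fun s => (measure_lt_top P₁ s).ne
  -- k * P₁ (R \ R') is finite
  have hkP₁A : (∫⁻ x in R \ R', k * p₁ x ∂μ) = k * P₁ (R \ R') := by
    rw [eP₁ _ hAm, lintegral_const_mul _ hp₁]
  have hkfinA : (∫⁻ x in R \ R', k * p₁ x ∂μ) ≠ ⊤ := by
    rw [hkP₁A]; exact ENNReal.mul_ne_top hk' (hP₁fin _)
  have hp₀finA : (∫⁻ x in R \ R', p₀ x ∂μ) ≠ ⊤ := by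
    refine ne_top_of_le_ne_top hkfinA (lintegral_mono_ae ?_)
    filter_upwards [ae_restrict_mem hAm] with x hx using (hltA x hx).le
  -- strict: ∫ p₀ on A < ∫ k p₁ on A
  have hstrict : (∫⁻ x in R \ R', p₀ x ∂μ) < ∫⁻ x in R \ R', k * p₁ x ∂μ := by
    have hsplit : (∫⁻ x in R \ R', k * p₁ x ∂μ)
        = (∫⁻ x in R \ R', p₀ x ∂μ) + ∫⁻ x in R \ R', (k * p₁ x - p₀ x) ∂μ := by
      rw [← lintegral_add_right _ (show Measurable (fun x => k * p₁ x - p₀ x) from (hp₁.const_mul k).sub hp₀)]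
      refine setLIntegral_congr_fun hAm ?_
      intro x hx
      exact (add_tsub_cancel_of_le (hltA x hx).le).symm
    have hposint : 0 < ∫⁻ x in R \ R', (k * p₁ x - p₀ x) ∂μ := by
      rw [lintegral_pos_iff_support (show Measurable (fun x => k * p₁ x - p₀ x) from (hp₁.const_mul k).sub hp₀)]
      calc 0 < μ (R \ R') := hmuA
        _ = μ.restrict (R \ R') (R \ R') := by rw [Measure.restrict_apply hAm, inter_self]
        _ ≤ μ.restrict (R \ R') (Function.support fun x => k * p₁ x - p₀ x) := by
          refine measure_mono fun x hx => ?_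
          exact fun h => absurd (tsub_eq_zero_iff_le.mp h) (not_le.mpr (hltA x hx))
    rw [hsplit]
    exact ENNReal.lt_add_right hp₀finA hposint.ne'
  -- so P₀ (R \ R') < k * P₁ (R \ R')
  have h1 : P₀ (R \ R') < k * P₁ (R \ R') := by
    rw [eP₀ _ hAm, ← hkP₁A]; exact hstrict
  -- on R' \ R : k * p₁ ≤ p₀
  have h2 : k * P₁ (R' \ R) ≤ P₀ (R' \ R) := by
    rw [eP₀ _ hBm, eP₁ _ hBm, ← lintegral_const_mul _ hp₁]
    refine lintegral_mono_ae ?_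
    filter_upwards [ae_restrict_mem hBm] with x hx
    have : ¬ (p₀ x < k * p₁ x) := by
      intro h; exact hx.2 (hR ▸ h)
    exact not_lt.mp this
  -- P₀ (R' \ R) ≤ P₀ (R \ R')
  have h3 : P₀ (R' \ R) ≤ P₀ (R \ R') := by
    have e1 : P₀ (R' ∩ R) + P₀ (R' \ R) = P₀ R' := measure_inter_add_diff R' hRm
    have e2 : P₀ (R ∩ R') + P₀ (R \ R') = P₀ R := measure_inter_add_diff R hR'
    have h : P₀ (R ∩ R') + P₀ (R' \ R) ≤ P₀ (R ∩ R') + P₀ (R \ R') := by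
      rw [e2, inter_comm R R', e1]; exact hle
    exact (ENNReal.add_le_add_iff_left (measure_lt_top P₀ _).ne).mp h
  have hkey : P₁ (R' \ R) < P₁ (R \ R') := by
    have : k * P₁ (R' \ R) < k * P₁ (R \ R') := lt_of_le_of_lt (h2.trans h3) h1
    exact (ENNReal.mul_lt_mul_iff_right hk.ne' hk').mp this
  calc P₁ R' = P₁ (R' ∩ R) + P₁ (R' \ R) := (measure_inter_add_diff R' hRm).symm
    _ < P₁ (R' ∩ R) + P₁ (R \ R') := ENNReal.add_lt_add_left (hP₁fin _) hkey
    _ = P₁ (R ∩ R') + P₁ (R \ R') := by rw [inter_comm]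
    _ = P₁ R := measure_inter_add_diff R hR'
end

section
/- (Optimality of the likelihood ratio for AUROC, discrete case) Let Ω be a finite set, p_in and p_out probability mass functions on Ω with p_in > 0. Among all score functions S : Ω → ℝ, the score L(x) = p_out(x)/p_in(x) maximizes P(S(X_out) > S(X_in)) + ½·P(S(X_out) = S(X_in)), where X_in ∼ p_in and X_out ∼ p_out are independent. -/
open Finset

/-- The AUROC (with ties counted half) of a score `S` for detecting samples from `p_out`
against `p_in`, for independent `X_out ∼ p_out` and `X_in ∼ p_in` on a finite space. -/
noncomputable def auroc {Ω : Type*} [Fintype Ω] (p_in p_out : Ω → ℝ) (S : Ω → ℝ) : ℝ :=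
  ∑ x : Ω, ∑ y : Ω, p_out x * p_in y *
    ((if S y < S x then (1 : ℝ) else 0) + (1 / 2) * (if S x = S y then (1 : ℝ) else 0))

noncomputable def fsc (a b : ℝ) : ℝ :=
  (if b < a then (1 : ℝ) else 0) + (1 / 2) * (if a = b then (1 : ℝ) else 0)

lemma fsc_nonneg (a b : ℝ) : 0 ≤ fsc a b := by
  unfold fsc; split <;> split <;> norm_num

lemma fsc_add (a b : ℝ) : fsc a b + fsc b a = 1 := by
  unfold fsc
  rcases lt_trichotomy a b with h | h | h
  · simp [h, asymm h, h.ne, h.ne']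
  · simp [h, lt_irrefl]; norm_num
  · simp [h, asymm h, h.ne, h.ne']

lemma fsc_le_one (a b : ℝ) : fsc a b ≤ 1 := by
  have := fsc_add a b
  have := fsc_nonneg b a
  linarith

lemma fsc_of_lt {a b : ℝ} (h : b < a) : fsc a b = 1 := by
  simp [fsc, h, h.ne']

lemma fsc_of_gt {a b : ℝ} (h : a < b) : fsc a b = 0 := by
  simp [fsc, asymm h, h.ne]

theorem stmt_15 {Ω : Type*} [Fintype Ω] (p_in p_out : Ω → ℝ)
    (hin_pos : ∀ x, 0 < p_in x) (hout_nonneg : ∀ x, 0 ≤ p_out x)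
    (hin_sum : ∑ x : Ω, p_in x = 1) (hout_sum : ∑ x : Ω, p_out x = 1)
    (L : Ω → ℝ) (hL : ∀ x, L x = p_out x / p_in x) :
    ∀ S : Ω → ℝ, auroc p_in p_out S ≤ auroc p_in p_out L := by
  intro S
  -- rewrite auroc in terms of fsc
  have hA : ∀ T : Ω → ℝ, auroc p_in p_out T
      = ∑ x : Ω, ∑ y : Ω, p_out x * p_in y * fsc (T x) (T y) := fun T => rfl
  -- doubled sum
  have hdouble : ∀ T : Ω → ℝ, 2 * auroc p_in p_out T
      = ∑ x : Ω, ∑ y : Ω, (p_out x * p_in y * fsc (T x) (T y)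
          + p_out y * p_in x * fsc (T y) (T x)) := by
    intro T
    have hswap2 : (∑ x : Ω, ∑ y : Ω, p_out x * p_in y * fsc (T x) (T y))
        = ∑ x : Ω, ∑ y : Ω, p_out y * p_in x * fsc (T y) (T x) :=
      Finset.sum_comm
    rw [hA, two_mul]
    nth_rewrite 2 [hswap2]
    rw [← Finset.sum_add_distrib]
    exact Finset.sum_congr rfl fun x _ => (Finset.sum_add_distrib).symm
  -- pairwise inequality
  have hpair : ∀ x y : Ω,
      p_out x * p_in y * fsc (S x) (S y) + p_out y * p_in x * fsc (S y) (S x)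
      ≤ p_out x * p_in y * fsc (L x) (L y) + p_out y * p_in x * fsc (L y) (L x) := by
    intro x y
    set a := p_out x * p_in y with ha
    set b := p_out y * p_in x with hb
    have hu1 : fsc (S y) (S x) = 1 - fsc (S x) (S y) := by
      have := fsc_add (S x) (S y); linarith
    have hv1 : fsc (L y) (L x) = 1 - fsc (L x) (L y) := by
      have := fsc_add (L x) (L y); linarith
    rw [hu1, hv1]
    set u := fsc (S x) (S y)
    set v := fsc (L x) (L y)
    have hu0 : 0 ≤ u := fsc_nonneg _ _
    have hule : u ≤ 1 := fsc_le_one _ _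
    rcases lt_trichotomy a b with h | h | h
    · -- a < b : L x < L y, v = 0
      have hlt : L x < L y := by
        rw [hL, hL, div_lt_div_iff₀ (hin_pos x) (hin_pos y)]
        exact h
      have hv : v = 0 := fsc_of_gt hlt
      rw [hv]; nlinarith
    · rw [h]; nlinarith
    · have hlt : L y < L x := by
        rw [hL, hL, div_lt_div_iff₀ (hin_pos y) (hin_pos x)]
        exact h
      have hv : v = 1 := fsc_of_lt hlt
      rw [hv]; nlinarith
  have h2 : 2 * auroc p_in p_out S ≤ 2 * auroc p_in p_out L := by
    rw [hdouble S, hdouble L]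
    exact Finset.sum_le_sum fun x _ => Finset.sum_le_sum fun y _ => hpair x y
  linarith
end
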